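/- For all λ, α ∈ ℂ, the 4-dimensional algebra L⁴₂₃(λ,α) with basis e₁,e₂,e₃,e₄ and nonzero products e₁e₁ = e₂, e₁e₂ = e₃, e₁e₃ = ((2-λ)α+1)e₄, e₂e₁ = λe₃, e₂e₂ = (λα+1)e₄, e₃e₁ = (λα-1)e₄ is a nilpotent left-symmetric algebra. -/
import Mathlib


/-- Span of the set of products of an element of `S` with an element of `T`. -/
def mulSpan {V : Type*} [AddCommGroup V] [Module ℂ V] (mul : V → V → V)
    (S T : Submodule ℂ V) : Submodule ℂ V :=
  Submodule.span ℂ {z | ∃ x ∈ S, ∃ y ∈ T, z = mul x y}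

/-- `piece mul n` is the span of all products of `n + 1` elements of the
algebra `(V, mul)`, with all possible bracketings. -/
def piece {V : Type*} [AddCommGroup V] [Module ℂ V] (mul : V → V → V) : ℕ → Submodule ℂ V
  | 0 => ⊤
  | n + 1 => ⨆ i : Fin (n + 1), mulSpan mul (piece mul i.1) (piece mul (n - i.1))

/-- An algebra is nilpotent if some power (with all bracketings) is zero. -/
def IsNilpotentMul {V : Type*} [AddCommGroup V] [Module ℂ V] (mul : V → V → V) : Prop :=
  ∃ n : ℕ, piece mul n = ⊥

/-- Multiplication of the algebra `L⁴₂₃(λ,α)`: on the basis `e₁, e₂, e₃, e₄`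
(indexed `0,…,3`) the nonzero products are `e₁e₁ = e₂`, `e₁e₂ = e₃`,
`e₁e₃ = ((2-λ)α+1)e₄`, `e₂e₁ = λe₃`, `e₂e₂ = (λα+1)e₄`, `e₃e₁ = (λα-1)e₄`. -/
def mulL423 (l a : ℂ) (x y : Fin 4 → ℂ) : Fin 4 → ℂ :=
  ![0, x 0 * y 0, x 0 * y 1 + l * (x 1 * y 0),
    ((2 - l) * a + 1) * (x 0 * y 2) + (l * a + 1) * (x 1 * y 1) +
      (l * a - 1) * (x 2 * y 0)]

/-- The filtration submodule: coordinates below `k` vanish. -/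
noncomputable def Vk (k : ℕ) : Submodule ℂ (Fin 4 → ℂ) where
  carrier := {x | ∀ m : Fin 4, (m : ℕ) < k → x m = 0}
  add_mem' hx hy m hm := by simp [hx m hm, hy m hm]
  zero_mem' m _ := rfl
  smul_mem' c x hx m hm := by simp [hx m hm]

lemma mem_Vk {k : ℕ} {x : Fin 4 → ℂ} : x ∈ Vk k ↔ ∀ m : Fin 4, (m : ℕ) < k → x m = 0 :=
  Iff.rfl

lemma mul_mem_Vk (l a : ℂ) (p q : ℕ) (x y : Fin 4 → ℂ)
    (hx : x ∈ Vk p) (hy : y ∈ Vk q) : mulL423 l a x y ∈ Vk (p + q + 1) := by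
  have key : ∀ i j : Fin 4, (i : ℕ) + (j : ℕ) + 1 < p + q + 1 → x i * y j = 0 := by
    intro i j h
    rcases lt_or_ge (i : ℕ) p with h' | h'
    · simp [hx i h']
    · have : (j : ℕ) < q := by omega
      simp [hy j this]
  have h00 : p + q ≥ 1 → x 0 * y 0 = 0 := fun h => key 0 0 (by simp; omega)
  have h01 : p + q ≥ 2 → x 0 * y 1 = 0 := fun h => key 0 1 (by simp; omega)
  have h10 : p + q ≥ 2 → x 1 * y 0 = 0 := fun h => key 1 0 (by simp; omega)
  have h02 : p + q ≥ 3 → x 0 * y 2 = 0 := fun h => key 0 2 (by norm_num; omega)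
  have h11 : p + q ≥ 3 → x 1 * y 1 = 0 := fun h => key 1 1 (by norm_num; omega)
  have h20 : p + q ≥ 3 → x 2 * y 0 = 0 := fun h => key 2 0 (by norm_num; omega)
  intro m hm
  fin_cases m
  · simp [mulL423]
  · have h : 1 < p + q + 1 := by simpa using hm
    simp [mulL423, h00 (by omega)]
  · have h : 2 < p + q + 1 := by simpa using hm
    simp [mulL423, h01 (by omega), h10 (by omega)]
  · have h : 3 < p + q + 1 := by simpa using hm
    simp [mulL423, h02 (by omega), h11 (by omega), h20 (by omega)]

lemma piece_le_Vk (l a : ℂ) : ∀ n, piece (mulL423 l a) n ≤ Vk n := by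
  intro n
  induction n using Nat.strong_induction_on with
  | _ n ih =>
    cases n with
    | zero => intro x _ m hm; omega
    | succ n =>
      simp only [piece]
      apply iSup_le
      intro i
      apply Submodule.span_le.mpr
      rintro z ⟨x, hx, y, hy, rfl⟩
      have hx' := ih i.1 (by omega) hx
      have hy' := ih (n - i.1) (by omega) hy
      have h := mul_mem_Vk l a i.1 (n - i.1) x y hx' hy'
      have he : i.1 + (n - i.1) + 1 = n + 1 := by omega
      rwa [he] at h

/-- for all `λ, α ∈ ℂ`, the algebra `L⁴₂₃(λ,α)` is a nilpotent
left-symmetric algebra. -/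
theorem L423_nilpotent_leftSymmetric (l a : ℂ) :
    (∀ x y z : Fin 4 → ℂ,
      mulL423 l a (mulL423 l a x y) z - mulL423 l a x (mulL423 l a y z) =
      mulL423 l a (mulL423 l a y x) z - mulL423 l a y (mulL423 l a x z)) ∧
    IsNilpotentMul (mulL423 l a) := by
  constructor
  · intro x y z
    funext i
    fin_cases i <;> simp [mulL423] <;> ring
  · refine ⟨4, le_bot_iff.mp ?_⟩
    intro x hx
    have h := piece_le_Vk l a 4 hx
    have : x = 0 := funext fun m => h m m.isLt
    simp [this]
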